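/- arXiv:2110.13109 — 2 statements merged into one kernel-verified Lean document; each statement's English description precedes it below -/
import Mathlib

section
/- Let H and K be groups with H abelian, let Z be a group with injective homomorphisms ι : Z → H and κ : Z → K whose images are central, and form the central product G = (H × K)/N, where N = {(ι(z), κ(z)⁻¹) : z ∈ Z}, with quotient map π : H × K → G. If (h₁,k₁), …, (hₙ,kₙ) ∈ H × K are such that the images π(h₁,k₁), …, π(hₙ,kₙ) pairwise commute in G, then k₁, …, kₙ pairwise commute in K. Consequently, the preimage under πⁿ : (H × K)ⁿ → Gⁿ of the set of commuting n-tuples of G is exactly Hⁿ × Cₙ(K), where Cₙ(K) is the set of commuting n-tuples of K. -/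
/-- Let `H` and `K` be groups with `H` abelian, let `Z` be a group with
injective homomorphisms `ι : Z → H` and `κ : Z → K` whose images are central, and form the
central product `G = (H × K)/N` where `N = {(ι z, (κ z)⁻¹) : z ∈ Z}`.  If the images of
`(h₁,k₁), …, (hₙ,kₙ)` in `G` pairwise commute, then `k₁, …, kₙ` pairwise commute in `K`;
consequently the preimage in `(H × K)ⁿ` of the set of commuting `n`-tuples of `G` is exactly
`Hⁿ × Cₙ(K)`. -/
theorem stmt_3 {H K Z : Type*} [CommGroup H] [Group K] [Group Z]
    (ι : Z →* H) (κ : Z →* K)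
    (hι : Function.Injective ι) (hκ : Function.Injective κ)
    (hκc : ∀ z : Z, κ z ∈ Subgroup.center K)
    (N : Subgroup (H × K)) [N.Normal]
    (hN : ∀ p : H × K, p ∈ N ↔ ∃ z : Z, p = (ι z, (κ z)⁻¹))
    (n : ℕ) (g : Fin n → H × K)
    (hg : ∀ i j : Fin n,
      Commute (QuotientGroup.mk (g i) : (H × K) ⧸ N) (QuotientGroup.mk (g j))) :
    (∀ i j : Fin n, Commute (g i).2 (g j).2) ∧
    (∀ g' : Fin n → H × K,
      (∀ i j : Fin n,
        Commute (QuotientGroup.mk (g' i) : (H × K) ⧸ N) (QuotientGroup.mk (g' j))) ↔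
      (∀ i j : Fin n, Commute (g' i).2 (g' j).2)) := by
  have key : ∀ a b : H × K,
      Commute (QuotientGroup.mk a : (H × K) ⧸ N) (QuotientGroup.mk b) ↔
      Commute a.2 b.2 := by
    intro a b
    constructor
    · intro h
      have h' : ((QuotientGroup.mk (a * b) : (H × K) ⧸ N)) = QuotientGroup.mk (b * a) := by
        simpa [QuotientGroup.mk_mul, commute_iff_eq] using h
      rw [QuotientGroup.eq] at h'
      obtain ⟨z, hz⟩ := (hN _).mp h'
      have h1 : (a * b)⁻¹ * (b * a) = (ι z, (κ z)⁻¹) := hz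
      have hfst : b.1⁻¹ * a.1⁻¹ * (b.1 * a.1) = ι z := by
        simpa [Prod.ext_iff, Prod.mul_def] using congrArg Prod.fst h1
      have hz1 : z = 1 := by
        apply hι
        rw [map_one, ← hfst]
        simp [mul_comm, mul_assoc, mul_left_comm]
      have hsnd : b.2⁻¹ * a.2⁻¹ * (b.2 * a.2) = (κ z)⁻¹ := by
        simpa [Prod.ext_iff, Prod.mul_def] using congrArg Prod.snd h1
      rw [hz1, map_one, inv_one] at hsnd
      have : b.2 * a.2 = a.2 * b.2 := by
        have := congrArg (fun x => a.2 * (b.2 * x)) hsnd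
        simpa [mul_assoc] using this
      exact this.symm
    · intro h
      have hab : a * b = b * a := by
        ext
        · exact mul_comm a.1 b.1
        · exact h
      have : ((QuotientGroup.mk (a * b) : (H × K) ⧸ N)) = QuotientGroup.mk (b * a) := by
        rw [hab]
      simpa [QuotientGroup.mk_mul, commute_iff_eq] using this
  refine ⟨fun i j => (key _ _).mp (hg i j), fun g' =>
    ⟨fun h i j => (key _ _).mp (h i j), fun h i j => (key _ _).mpr (h i j)⟩⟩
end

section
/- Let G be a compact Lie group whose identity component G₀ = T is abelian (hence a torus), so that G is an extension of the finite group Q = G/T by T. Then every element of the identity component [G,G]₀ of the commutator subgroup [G,G] can be written as a finite product [g₁,t₁]·[g₂,t₂]⋯[gₙ,tₙ] with g₁,…,gₙ ∈ G and t₁,…,tₙ ∈ T. -/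
open Set
open scoped commutatorElement

/-- A charted space modelled on a model with corners is locally connected somewhere,
hence (for a topological group) the identity component is open. -/
theorem stmt6_isOpen_connectedComponentOfOne
    {E : Type*} [NormedAddCommGroup E] [NormedSpace ℝ E]
    {H : Type*} [TopologicalSpace H] (I : ModelWithCorners ℝ E H)
    (G : Type*) [Group G] [TopologicalSpace G] [ChartedSpace H G]
    [IsTopologicalGroup G] :
    IsOpen ((Subgroup.connectedComponentOfOne G : Subgroup G) : Set G) := by
  set e := extChartAt I (1 : G) with he
  set O : Set E := I.symm ⁻¹' (chartAt H (1 : G)).target with hO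
  have hOopen : IsOpen O := (chartAt H (1 : G)).open_target.preimage I.continuous_symm
  have htarget : e.target = O ∩ Set.range I := extChartAt_target I (1 : G)
  have h1t : e (1 : G) ∈ e.target := mem_extChartAt_target (1 : G)
  rw [htarget] at h1t
  have h2 : e (1 : G) ∈ closure (O ∩ interior (Set.range I)) :=
    hOopen.inter_closure ⟨h1t.1, I.range_subset_closure_interior h1t.2⟩
  have hne : (O ∩ interior (Set.range I)).Nonempty := by
    by_contra h
    rw [Set.not_nonempty_iff_eq_empty] at h
    rw [h, closure_empty] at h2
    exact h2
  obtain ⟨y, hyO, hyI⟩ := hne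
  have hWopen : IsOpen (O ∩ interior (Set.range I)) := hOopen.inter isOpen_interior
  obtain ⟨ε, hε, hball⟩ := Metric.isOpen_iff.mp hWopen y ⟨hyO, hyI⟩
  have hBt : Metric.ball y ε ⊆ e.target := fun z hz => by
    rw [htarget]; exact ⟨(hball hz).1, interior_subset (hball hz).2⟩
  have hU : e.symm '' Metric.ball y ε = e.source ∩ e ⁻¹' Metric.ball y ε :=
    e.symm_image_eq_source_inter_preimage hBt
  have hUopen : IsOpen (e.source ∩ e ⁻¹' Metric.ball y ε) :=
    (continuousOn_extChartAt (1 : G)).isOpen_inter_preimage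
      (isOpen_extChartAt_source (1 : G)) Metric.isOpen_ball
  have hUconn : IsPreconnected (e.symm '' Metric.ball y ε) :=
    ((convex_ball y ε).isPreconnected).image _
      ((continuousOn_extChartAt_symm (1 : G)).mono hBt)
  have hg0 : e.symm y ∈ e.symm '' Metric.ball y ε :=
    ⟨y, Metric.mem_ball_self hε, rfl⟩
  have hsub : e.symm '' Metric.ball y ε ⊆ connectedComponent (e.symm y) :=
    hUconn.subset_connectedComponent hg0
  have hmem : connectedComponent (e.symm y) ∈ nhds (e.symm y) :=
    Filter.mem_of_superset (hUopen.mem_nhds (hU ▸ hg0)) (hU ▸ hsub)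
  -- transport to 1 via left translation
  set h : G ≃ₜ G := Homeomorph.mulLeft (e.symm y)⁻¹ with hh
  have himg : h '' connectedComponent (e.symm y) ⊆ connectedComponent (1 : G) := by
    have := h.continuous.image_connectedComponent_subset (e.symm y)
    simpa [hh] using this
  have hmem1 : connectedComponent (1 : G) ∈ nhds (1 : G) := by
    have h1 : (1 : G) = h (e.symm y) := by simp [hh]
    have hmap := h.map_nhds_eq (e.symm y)
    refine Filter.mem_of_superset ?_ himg
    rw [show nhds (1 : G) = nhds (h (e.symm y)) by simp [hh], ← hmap]
    exact Filter.image_mem_map hmem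
  exact Subgroup.isOpen_of_mem_nhds _ hmem1

namespace Stmt6

variable {G : Type*} [Group G] [TopologicalSpace G] [IsTopologicalGroup G]

/-- The set of commutators `g⁻¹ t⁻¹ g t` with `t` in the identity component. -/
def commSet (G : Type*) [Group G] [TopologicalSpace G] [IsTopologicalGroup G] : Set G :=
  {x : G | ∃ g t : G, t ∈ Subgroup.connectedComponentOfOne G ∧ x = g⁻¹ * t⁻¹ * g * t}

theorem tnormal : (Subgroup.connectedComponentOfOne G).Normal := by
  constructor
  intro n hn g
  have hc : Continuous fun x : G => g * x * g⁻¹ := by continuity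
  have h2 := hc.image_connectedComponent_subset (1 : G)
  have h3 : g * n * g⁻¹ ∈ (fun x : G => g * x * g⁻¹) '' connectedComponent (1 : G) :=
    ⟨n, hn, rfl⟩
  have h4 := h2 h3
  exact (by simpa using h4 : g * n * g⁻¹ ∈ connectedComponent (1 : G))

theorem commSet_subset_T : commSet G ⊆ (Subgroup.connectedComponentOfOne G : Set G) := by
  rintro x ⟨g, t, ht, rfl⟩
  have h1 : g⁻¹ * t⁻¹ * g ∈ Subgroup.connectedComponentOfOne G := by
    have := (tnormal (G := G)).conj_mem t⁻¹ (inv_mem ht) g⁻¹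
    simpa [mul_assoc] using this
  exact mul_mem h1 ht

theorem commSet_inv {x : G} (hx : x ∈ commSet G) : x⁻¹ ∈ commSet G := by
  obtain ⟨g, t, ht, rfl⟩ := hx
  refine ⟨g⁻¹, g⁻¹ * t * g, ?_, by group⟩
  have := (tnormal (G := G)).conj_mem t ht g⁻¹
  simpa [mul_assoc] using this

theorem knormal : (Subgroup.closure (commSet G)).Normal := by
  constructor
  intro n hn g
  induction hn using Subgroup.closure_induction with
  | mem x hx =>
    obtain ⟨a, t, ht, rfl⟩ := hx
    refine Subgroup.subset_closure ⟨g * a * g⁻¹, g * t * g⁻¹, (tnormal (G := G)).conj_mem t ht g, by group⟩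
  | one => simpa using (Subgroup.closure (commSet G)).one_mem
  | mul x y _ _ hx hy =>
    have : g * (x * y) * g⁻¹ = (g * x * g⁻¹) * (g * y * g⁻¹) := by group
    rw [this]; exact mul_mem hx hy
  | inv x _ hx =>
    have : g * x⁻¹ * g⁻¹ = (g * x * g⁻¹)⁻¹ := by group
    rw [this]; exact inv_mem hx

end Stmt6

namespace Stmt6

variable {G : Type*} [Group G] [TopologicalSpace G] [IsTopologicalGroup G]

set_option maxHeartbeats 1000000 in
theorem kcompact [CompactSpace G]
    (habel : ∀ a ∈ Subgroup.connectedComponentOfOne G,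
      ∀ b ∈ Subgroup.connectedComponentOfOne G, a * b = b * a)
    [hQ : Finite (G ⧸ Subgroup.connectedComponentOfOne G)] :
    IsCompact ((Subgroup.closure (commSet G) : Subgroup G) : Set G) := by
  set T : Subgroup G := Subgroup.connectedComponentOfOne G with hTdef
  letI : CommGroup ↥T :=
    { (inferInstance : Group ↥T) with
      mul_comm := fun a b => Subtype.ext (habel ↑a a.2 ↑b b.2) }
  letI : Fintype (G ⧸ T) := Fintype.ofFinite _
  letI : DecidableEq (G ⧸ T) := Classical.decEq _
  haveI : CompactSpace ↥T :=
    isCompact_iff_compactSpace.mp (isClosed_connectedComponent.isCompact)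
  -- conjugation homomorphism
  have hmemc : ∀ (g : G) (t : ↥T), g⁻¹ * ↑t * g ∈ T := by
    intro g t
    have := (tnormal (G := G)).conj_mem ↑t t.2 g⁻¹
    simpa [mul_assoc] using this
  let c : G → (↥T →* ↥T) := fun g =>
    { toFun := fun t => ⟨g⁻¹ * ↑t * g, hmemc g t⟩
      map_one' := by ext; simp
      map_mul' := fun t s => by ext; push_cast; group }
  let φ : G → (↥T →* ↥T) := fun g =>
    { toFun := fun t => c g t⁻¹ * t
      map_one' := by simp
      map_mul' := fun t s => by
        have h1 : (t * s)⁻¹ = t⁻¹ * s⁻¹ := by rw [mul_inv_rev, mul_comm]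
        show c g (t * s)⁻¹ * (t * s) = c g t⁻¹ * t * (c g s⁻¹ * s)
        rw [h1, map_mul]
        exact mul_mul_mul_comm _ _ _ _ }
  have hφ : ∀ (g : G) (t : ↥T), (↑(φ g t) : G) = g⁻¹ * (↑t)⁻¹ * g * ↑t := by
    intro g t
    show (↑(c g t⁻¹ * t) : G) = _
    push_cast [c]
    rfl
  have hφcoset : ∀ (a τ : G), τ ∈ T → φ (a * τ) = φ a := by
    intro a τ hτ
    ext t
    have hu : a⁻¹ * (↑t)⁻¹ * a ∈ T := by
      have := (tnormal (G := G)).conj_mem (↑t)⁻¹ (inv_mem t.2) a⁻¹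
      simpa [mul_assoc] using this
    have hcomm := habel _ hu τ hτ
    have : (↑(φ (a * τ) t) : G) = (↑(φ a t) : G) := by
      rw [hφ, hφ]
      calc (a * τ)⁻¹ * (↑t)⁻¹ * (a * τ) * ↑t
          = τ⁻¹ * ((a⁻¹ * (↑t)⁻¹ * a) * τ) * ↑t := by group
        _ = τ⁻¹ * (τ * (a⁻¹ * (↑t)⁻¹ * a)) * ↑t := by rw [hcomm]
        _ = a⁻¹ * (↑t)⁻¹ * a * ↑t := by group
    exact this
  -- the big product homomorphism
  let Φm : ((G ⧸ T) → ↥T) →* ↥T :=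
    { toFun := fun f => ∏ q : G ⧸ T, φ (Quotient.out q) (f q)
      map_one' := by simp
      map_mul' := fun f f' => by
        simp only [Pi.mul_apply, map_mul]
        rw [Finset.prod_mul_distrib] }
  have hφcont : ∀ g : G, Continuous (φ g) := by
    intro g
    have hc : Continuous (c g) := by
      apply Continuous.subtype_mk
      continuity
    exact ((hc.comp continuous_inv).mul continuous_id)
  have hΦcont : Continuous Φm := by
    show Continuous fun f : (G ⧸ T) → ↥T => ∏ q : G ⧸ T, φ (Quotient.out q) (f q)
    exact continuous_finset_prod _ fun q _ => (hφcont _).comp (continuous_apply q)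
  have heq : Subgroup.closure (commSet G) = Subgroup.map T.subtype Φm.range := by
    apply le_antisymm
    · rw [Subgroup.closure_le]
      rintro x ⟨g, t, ht, rfl⟩
      let tt : ↥T := ⟨t, ht⟩
      let f : (G ⧸ T) → ↥T := fun q => if q = QuotientGroup.mk g then tt else 1
      have h2 : Φm f = φ (Quotient.out (QuotientGroup.mk g : G ⧸ T)) tt := by
        show (∏ q : G ⧸ T, φ (Quotient.out q) (f q)) = _
        rw [Fintype.prod_eq_single (QuotientGroup.mk g)
          (fun q hq => by simp only [f, if_neg hq, map_one])]
        simp only [f, if_pos rfl]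
      have hout : (QuotientGroup.mk (Quotient.out (QuotientGroup.mk g : G ⧸ T)) : G ⧸ T)
          = QuotientGroup.mk g := Quotient.out_eq _
      have hτ : g⁻¹ * Quotient.out (QuotientGroup.mk g : G ⧸ T) ∈ T :=
        QuotientGroup.eq.mp hout.symm
      have hrw : Quotient.out (QuotientGroup.mk g : G ⧸ T)
          = g * (g⁻¹ * Quotient.out (QuotientGroup.mk g : G ⧸ T)) := by group
      have h3 : Φm f = φ g tt := by
        rw [h2, hrw, hφcoset g _ hτ]
      exact ⟨Φm f, ⟨f, rfl⟩, by rw [h3]; simpa using hφ g tt⟩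
    · rintro x ⟨y, hy, rfl⟩
      obtain ⟨f, rfl⟩ := hy
      show (↑(Φm f) : G) ∈ Subgroup.closure (commSet G)
      have : Φm f = ∏ q : G ⧸ T, φ (Quotient.out q) (f q) := rfl
      rw [this]
      have hind := Finset.prod_induction (s := (Finset.univ : Finset (G ⧸ T))) (fun q : G ⧸ T => φ (Quotient.out q) (f q))
        (fun z : ↥T => z ∈ (Subgroup.closure (commSet G)).comap T.subtype)
        (fun a b ha hb => mul_mem ha hb)
        (one_mem _)
        (fun q _ => Subgroup.mem_comap.mpr (Subgroup.subset_closure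
          ⟨Quotient.out q, ↑(f q), (f q).2, (hφ _ _).symm⟩))
      exact Subgroup.mem_comap.mp hind
  rw [heq]
  have h1 : (Subgroup.map T.subtype Φm.range : Set G) = T.subtype '' (Φm.range : Set ↥T) :=
    Subgroup.coe_map _ _
  rw [h1]
  have h2 : (Φm.range : Set ↥T) = Set.range Φm := MonoidHom.coe_range _
  rw [h2]
  exact (isCompact_range hΦcont).image continuous_subtype_val

end Stmt6

namespace Stmt6

variable {G : Type*} [Group G] [TopologicalSpace G] [IsTopologicalGroup G]

set_option maxHeartbeats 1000000 in
theorem mem_K [CompactSpace G] [T2Space G]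
    (habel : ∀ a ∈ Subgroup.connectedComponentOfOne G,
      ∀ b ∈ Subgroup.connectedComponentOfOne G, a * b = b * a)
    [hQ : Finite (G ⧸ Subgroup.connectedComponentOfOne G)] :
    ∀ x ∈ (Subgroup.connectedComponentOfOne ↥(commutator G)).map (commutator G).subtype,
      x ∈ Subgroup.closure (commSet G) := by
  set T : Subgroup G := Subgroup.connectedComponentOfOne G with hTdef
  set K : Subgroup G := Subgroup.closure (commSet G) with hKdef
  haveI : K.Normal := knormal
  have hKcl : IsClosed (K : Set G) := (kcompact habel).isClosed
  set π := QuotientGroup.mk' K with hπdef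
  have hπcomm : ∀ (g t : G), t ∈ T → π ⁅g, t⁆ = 1 := by
    intro g t ht
    apply (QuotientGroup.eq_one_iff _).mpr
    exact Subgroup.subset_closure ⟨g⁻¹, t⁻¹, inv_mem ht, by
      rw [commutatorElement_def]; group⟩
  have hcommute : ∀ t : G, t ∈ T → ∀ y : G ⧸ K, Commute (π t) y := by
    intro t ht y
    obtain ⟨z, rfl⟩ := QuotientGroup.mk'_surjective K y
    have h1 := hπcomm z t ht
    rw [map_commutatorElement] at h1
    exact (commutatorElement_eq_one_iff_commute.mp h1).symm
  have hdep : ∀ a b t s : G, t ∈ T → s ∈ T → π ⁅a * t, b * s⁆ = π ⁅a, b⁆ := by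
    intro a b t s ht hs
    rw [map_commutatorElement, map_commutatorElement, map_mul, map_mul]
    have hτ := hcommute t ht
    have hσ := hcommute s hs
    set A := π a; set B := π b; set τ := π t; set σ := π s
    have conj_eq : ∀ z w x : G ⧸ K, (∀ y, Commute z y) → (w * z) * x * (w * z)⁻¹ = w * x * w⁻¹ := by
      intro z w x hz
      have h1 : z * x * z⁻¹ = x := by
        rw [(hz x).eq]; group
      calc (w * z) * x * (w * z)⁻¹ = w * (z * x * z⁻¹) * w⁻¹ := by group
        _ = w * x * w⁻¹ := by rw [h1]
    calc ⁅A * τ, B * σ⁆ = ((A * τ) * (B * σ) * (A * τ)⁻¹) * (B * σ)⁻¹ := by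
          rw [commutatorElement_def]
      _ = (A * (B * σ) * A⁻¹) * (B * σ)⁻¹ := by rw [conj_eq τ A (B * σ) hτ]
      _ = A * B * (σ * A⁻¹) * σ⁻¹ * B⁻¹ := by group
      _ = A * B * (A⁻¹ * σ) * σ⁻¹ * B⁻¹ := by rw [(hσ A⁻¹).eq]
      _ = ⁅A, B⁆ := by rw [commutatorElement_def]; group
  -- the commutator set of the quotient is finite
  have hFfin : (commutatorSet (G ⧸ K)).Finite := by
    apply Set.Finite.subset (Set.finite_range
      (fun p : (G ⧸ T) × (G ⧸ T) => π ⁅Quotient.out p.1, Quotient.out p.2⁆))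
    rintro x ⟨g1, g2, rfl⟩
    obtain ⟨a, rfl⟩ := QuotientGroup.mk'_surjective K g1
    obtain ⟨b, rfl⟩ := QuotientGroup.mk'_surjective K g2
    refine ⟨(QuotientGroup.mk a, QuotientGroup.mk b), ?_⟩
    show π ⁅Quotient.out (QuotientGroup.mk a : G ⧸ T), Quotient.out (QuotientGroup.mk b : G ⧸ T)⁆
      = ⁅π a, π b⁆
    rw [← map_commutatorElement]
    have ha : a⁻¹ * Quotient.out (QuotientGroup.mk a : G ⧸ T) ∈ T :=
      QuotientGroup.eq.mp (Quotient.out_eq _).symm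
    have hb : b⁻¹ * Quotient.out (QuotientGroup.mk b : G ⧸ T) ∈ T :=
      QuotientGroup.eq.mp (Quotient.out_eq _).symm
    have hra : Quotient.out (QuotientGroup.mk a : G ⧸ T)
        = a * (a⁻¹ * Quotient.out (QuotientGroup.mk a : G ⧸ T)) := by group
    have hrb : Quotient.out (QuotientGroup.mk b : G ⧸ T)
        = b * (b⁻¹ * Quotient.out (QuotientGroup.mk b : G ⧸ T)) := by group
    rw [hra, hrb, hdep a b _ _ ha hb]
  haveI : Finite ↥(commutatorSet (G ⧸ K)) := hFfin.to_subtype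
  haveI hfinC : Finite ↥(commutator (G ⧸ K)) := inferInstance
  have hFc : ((commutator (G ⧸ K) : Subgroup (G ⧸ K)) : Set (G ⧸ K)).Finite := Set.toFinite _
  -- fibers of π are closed
  have hfib : ∀ y : G ⧸ K, IsClosed {x : G | π x = y} := by
    intro y
    obtain ⟨a, rfl⟩ := QuotientGroup.mk'_surjective K y
    have hset : {x : G | π x = π a} = (fun x : G => a⁻¹ * x) ⁻¹' (K : Set G) := by
      ext x
      simp only [Set.mem_setOf_eq, Set.mem_preimage, SetLike.mem_coe]
      rw [eq_comm]
      exact QuotientGroup.eq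
    rw [hset]
    exact hKcl.preimage (continuous_const.mul continuous_id)
  set V : Set G := π ⁻¹' ((commutator (G ⧸ K) : Set (G ⧸ K)) \ {1}) with hVdef
  have hVcl : IsClosed V := by
    rw [hVdef, ← Set.biUnion_preimage_singleton]
    exact Set.Finite.isClosed_biUnion (hFc.subset Set.diff_subset) (fun y _ => hfib y)
  intro x hx
  set Cs : Set G :=
    ((Subgroup.connectedComponentOfOne ↥(commutator G)).map (commutator G).subtype : Set G)
    with hCdef
  have hCpre : IsPreconnected Cs := by
    have h1 : Cs = Subtype.val '' (connectedComponent (1 : ↥(commutator G))) := by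
      rw [hCdef, Subgroup.coe_map]
      rfl
    rw [h1]
    exact isPreconnected_connectedComponent.image _ continuous_subtype_val.continuousOn
  have hCK : ∀ z ∈ Cs, π z ∈ commutator (G ⧸ K) := by
    intro z hz
    obtain ⟨w, _, rfl⟩ := hz
    have hle : Subgroup.map (π : G →* G ⧸ K) (commutator G) ≤ commutator (G ⧸ K) := by
      rw [commutator_def, commutator_def, Subgroup.map_commutator]
      exact Subgroup.commutator_mono le_top le_top
    exact hle (Subgroup.mem_map_of_mem _ w.2)
  have hdisj : ∀ z, z ∈ (K : Set G) → z ∉ V := by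
    intro z hz hzV
    have : π z = 1 := (QuotientGroup.eq_one_iff z).mpr hz
    exact hzV.2 this
  have hcover : Cs ⊆ (K : Set G) ∪ V := by
    intro z hz
    by_cases h : π z = 1
    · exact Or.inl ((QuotientGroup.eq_one_iff z).mp h)
    · exact Or.inr ⟨hCK z hz, h⟩
  by_contra hxK
  have hres := hCpre Vᶜ (K : Set G)ᶜ hVcl.isOpen_compl hKcl.isOpen_compl
    (by
      intro z hz
      rcases hcover hz with h | h
      · exact Or.inl (hdisj z h)
      · exact Or.inr (fun hzK => hdisj z hzK h))
    ⟨1, (Subgroup.map _ _).one_mem, hdisj 1 (one_mem K)⟩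
    ⟨x, hx, hxK⟩
  obtain ⟨z, hzC, hzV, hzK⟩ := hres
  rcases hcover hzC with h | h
  · exact hzK h
  · exact hzV h

end Stmt6

namespace Stmt6

variable {G : Type*} [Group G] [TopologicalSpace G] [IsTopologicalGroup G]

theorem repr_of_mem_K {x : G} (hx : x ∈ Subgroup.closure (commSet G)) :
    ∃ (n : ℕ) (g t : Fin n → G),
      (∀ i, t i ∈ Subgroup.connectedComponentOfOne G) ∧
      x = (List.ofFn fun i => (g i)⁻¹ * (t i)⁻¹ * g i * t i).prod := by
  have hx' : x ∈ Submonoid.closure (commSet G ∪ (commSet G)⁻¹) := by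
    have h1 : x ∈ (Subgroup.closure (commSet G)).toSubmonoid := hx
    rwa [Subgroup.closure_toSubmonoid (commSet G)] at h1
  obtain ⟨l, hl, hprod⟩ := Submonoid.exists_list_of_mem_closure hx'
  have hS : ∀ y ∈ l, y ∈ commSet G := by
    intro y hy
    rcases hl y hy with h | h
    · exact h
    · have := commSet_inv (Set.mem_inv.mp h)
      simpa using this
  have hls : ∀ i : Fin l.length, ∃ gt : G × G,
      gt.2 ∈ Subgroup.connectedComponentOfOne G ∧
      l.get i = gt.1⁻¹ * gt.2⁻¹ * gt.1 * gt.2 := by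
    intro i
    obtain ⟨g, t, ht, heq⟩ := hS (l.get i) (l.get_mem i)
    exact ⟨(g, t), ht, heq⟩
  choose gt hmem heq using hls
  refine ⟨l.length, fun i => (gt i).1, fun i => (gt i).2, hmem, ?_⟩
  have hfn : (fun i : Fin l.length => ((gt i).1)⁻¹ * ((gt i).2)⁻¹ * (gt i).1 * (gt i).2)
      = l.get := funext fun i => (heq i).symm
  rw [hfn, List.ofFn_get, hprod]

end Stmt6

/-- Let `G` be a compact Lie group whose identity component `G₀ = T` is abelian
(hence a torus). Then every element of the identity component `[G,G]₀` of the commutator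
subgroup `[G,G]` can be written as a finite product `[g₁,t₁]⋯[gₙ,tₙ]` with `gᵢ ∈ G`, `tᵢ ∈ T`,
where `[x,y] = x⁻¹y⁻¹xy`. -/
theorem stmt_6 {E : Type*} [NormedAddCommGroup E] [NormedSpace ℝ E] [FiniteDimensional ℝ E]
    {H : Type*} [TopologicalSpace H] (I : ModelWithCorners ℝ E H)
    (G : Type*) [Group G] [TopologicalSpace G] [ChartedSpace H G] [LieGroup I (⊤ : ℕ∞) G]
    [IsTopologicalGroup G] [T2Space G] [CompactSpace G]
    (habel : ∀ a ∈ Subgroup.connectedComponentOfOne G,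
      ∀ b ∈ Subgroup.connectedComponentOfOne G, a * b = b * a) :
    ∀ x ∈ (Subgroup.connectedComponentOfOne ↥(commutator G)).map (commutator G).subtype,
      ∃ (n : ℕ) (g t : Fin n → G),
        (∀ i, t i ∈ Subgroup.connectedComponentOfOne G) ∧
        x = (List.ofFn fun i => (g i)⁻¹ * (t i)⁻¹ * g i * t i).prod := by
  intro x hx
  have hopen := stmt6_isOpen_connectedComponentOfOne I G
  haveI : Finite (G ⧸ Subgroup.connectedComponentOfOne G) :=
    Subgroup.quotient_finite_of_isOpen _ hopen
  exact Stmt6.repr_of_mem_K (Stmt6.mem_K habel x hx)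
end
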